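/- For s, s' ≥ 1, t_s divides t_{s'} (over ℤ) if and only if s divides s' and s'/s is odd. -/
import Mathlib


open Polynomial

noncomputable def t : ℕ → Polynomial ℤ
  | 0 => 2
  | 1 => X
  | (n + 2) => X * t (n + 1) - t n

lemma t_add_two (n : ℕ) : t (n + 2) = X * t (n + 1) - t n := rfl

lemma t_key : ∀ n m : ℕ, t (m + n) * t n = t (m + 2 * n) + t m := by
  intro n
  induction n using Nat.strong_induction_on with
  | _ n ih =>
    match n with
    | 0 => intro m; simp [t]; ring
    | 1 => intro m
           show t (m+1) * t 1 = t (m+2) + t m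
           rw [t_add_two]; simp [t]; ring
    | (n + 2) =>
      intro m
      have h1 := ih (n+1) (by omega) (m+1)
      have h2 := ih n (by omega) (m+2)
      have e1 : t (m + (n+2)) = t ((m+1) + (n+1)) := by ring_nf
      have e2 : t ((m+1) + (n+1)) = t ((m+2) + n) := by ring_nf
      calc t (m + (n+2)) * t (n+2)
          = t (m + (n+2)) * (X * t (n+1) - t n) := by rw [t_add_two]
        _ = X * (t ((m+1) + (n+1)) * t (n+1)) - t ((m+2) + n) * t n := by
            rw [e1, e2]; ring
        _ = X * (t (m+1 + 2*(n+1)) + t (m+1)) - (t (m+2 + 2*n) + t (m+2)) := by rw [h1, h2]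
        _ = t (m + 2*(n+2)) + t m := by
            rw [show m+1+2*(n+1) = m+2*n+3 by ring, show m+2+2*n = m+2*n+2 by ring,
                show m + 2*(n+2) = (m+2*n+2)+2 by ring, t_add_two (m+2*n+2),
                show (m+2*n+2)+1 = m+2*n+3 from rfl,
                show t (m+2) = X * t (m+1) - t m from rfl]
            ring

lemma t_deg_le : ∀ n, (t n).natDegree ≤ n := by
  intro n
  induction n using Nat.strong_induction_on with
  | _ n ih =>
    match n with
    | 0 => show (2 : Polynomial ℤ).natDegree ≤ 0; simp
    | 1 => show (X : Polynomial ℤ).natDegree ≤ 1; simp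
    | (n+2) =>
      rw [t_add_two]
      refine le_trans (natDegree_sub_le _ _) ?_
      refine max_le (le_trans (natDegree_mul_le) ?_) (le_trans (ih n (by omega)) (by omega))
      have := ih (n+1) (by omega)
      simp only [natDegree_X]
      omega

lemma t_coeff : ∀ n, 1 ≤ n → (t n).coeff n = 1 := by
  intro n
  induction n using Nat.strong_induction_on with
  | _ n ih =>
    match n with
    | 0 => intro h; omega
    | 1 => intro _; show (X : Polynomial ℤ).coeff 1 = 1; simp
    | 2 => intro _
           show (X * X - 2 : Polynomial ℤ).coeff 2 = 1
           simp [coeff_X_mul, coeff_sub, ← sq, coeff_X_pow]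
    | (n+3) =>
      intro _
      rw [t_add_two, coeff_sub, show n+3 = (n+2)+1 from rfl, coeff_X_mul,
          ih (n+2) (by omega) (by omega),
          coeff_eq_zero_of_natDegree_lt (lt_of_le_of_lt (t_deg_le (n+1)) (by omega))]
      ring

lemma t_monic (n : ℕ) (hn : 1 ≤ n) : (t n).Monic := by
  exact monic_of_natDegree_le_of_coeff_eq_one n (t_deg_le n) (t_coeff n hn)

lemma t_natDegree (n : ℕ) : (t n).natDegree = n := by
  match n with
  | 0 => show (2 : Polynomial ℤ).natDegree = 0; simp
  | (n+1) =>
    refine le_antisymm (t_deg_le _) ?_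
    exact le_natDegree_of_ne_zero (by rw [t_coeff (n+1) (by omega)]; norm_num)

lemma t_ne_zero (n : ℕ) : t n ≠ 0 := by
  match n with
  | 0 => show (2 : Polynomial ℤ) ≠ 0; norm_num
  | (n+1) => exact (t_monic (n+1) (by omega)).ne_zero

lemma t_not_dvd (s r : ℕ) (hr : r < s) : ¬ t s ∣ t r := by
  intro h
  have := Polynomial.natDegree_le_of_dvd h (t_ne_zero r)
  rw [t_natDegree, t_natDegree] at this
  omega

lemma t_dvd_add (s m : ℕ) : t s ∣ t (m + 2*s) + t m :=
  ⟨t (m+s), by rw [← t_key s m]; ring⟩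

lemma t_per (s q m : ℕ) : t s ∣ t (m + 2*s*q) - (-1)^q * t m := by
  induction q with
  | zero => simp
  | succ q ih =>
    have h1 : t s ∣ t ((m + 2*s*q) + 2*s) + t (m + 2*s*q) := t_dvd_add s _
    have e : t (m + 2*s*(q+1)) - (-1)^(q+1) * t m =
        (t ((m + 2*s*q) + 2*s) + t (m + 2*s*q)) - (t (m + 2*s*q) - (-1)^q * t m) := by
      rw [show m + 2*s*(q+1) = m + 2*s*q + 2*s by ring]; ring
    rw [e]; exact dvd_sub h1 ih

lemma t_refl (s m : ℕ) (h : m ≤ s) : t s ∣ t (2*s - m) + t m := by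
  have := t_key (s - m) m
  rw [show m + (s - m) = s by omega, show m + 2*(s-m) = 2*s - m by omega] at this
  exact ⟨t (s - m), this.symm⟩

theorem stmt_16 (s s' : ℕ) (hs : 1 ≤ s) (hs' : 1 ≤ s') :
    t s ∣ t s' ↔ s ∣ s' ∧ Odd (s' / s) := by
  set q := s' / (2*s) with hq
  set r := s' % (2*s) with hr
  have hrlt : r < 2*s := Nat.mod_lt _ (by omega)
  have hsr : s' = r + 2*s*q := by rw [hr, hq]; exact (Nat.mod_add_div s' (2*s)).symm
  have hper : t s ∣ t s' - (-1)^q * t r := by rw [hsr]; exact t_per s q r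
  have step1 : t s ∣ t s' ↔ t s ∣ t r := by
    constructor
    · intro h
      have h2 : t s ∣ (-1)^q * t r := by
        have := dvd_sub h hper
        simpa using this
      rcases Nat.even_or_odd q with he | ho
      · rwa [he.neg_one_pow, one_mul] at h2
      · rw [ho.neg_one_pow] at h2; simpa using h2.neg_right
    · intro h
      have : t s ∣ (-1)^q * t r := h.mul_left _
      have := dvd_add hper this
      simpa using this
  rw [step1]
  have step2 : t s ∣ t r ↔ r = s := by
    constructor
    · intro h
      by_contra hne
      rcases lt_or_gt_of_ne hne with hlt | hgt
      · exact t_not_dvd s r hlt h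
      · have hm : 2*s - r ≤ s := by omega
        have href := t_refl s (2*s - r) (by omega)
        rw [show 2*s - (2*s - r) = r by omega] at href
        have : t s ∣ t (2*s - r) := (dvd_add_right h).mp href
        exact t_not_dvd s (2*s - r) (by omega) this
    · intro h; rw [h]
  rw [step2]
  constructor
  · intro h
    rw [h] at hsr
    have hs'eq : s' = s * (2*q + 1) := by rw [hsr]; ring
    refine ⟨⟨2*q+1, hs'eq⟩, ?_⟩
    rw [hs'eq, Nat.mul_div_cancel_left _ (by omega)]
    exact ⟨q, by ring⟩
  · rintro ⟨⟨k, hk⟩, hodd⟩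
    rw [hk, Nat.mul_div_cancel_left _ (by omega)] at hodd
    obtain ⟨j, hj⟩ := hodd
    have : s' = s + (2*s) * j := by rw [hk, hj]; ring
    rw [hr, this, Nat.add_mul_mod_self_left, Nat.mod_eq_of_lt (by omega)]
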